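/- Let G = (V,E) be a finite graph and c a positive integer. Choose pairwise disjoint sets I_e (e ∈ E) of size c, disjoint from V, set n = |V| + c|E| and k = c, and assign to each edge e ∈ E a distinct binary digit position j_e. Define a position x of Moore's NIM game NIM(n,k) with one pile for each element of V ∪ ⋃_{e∈E} I_e, where the binary digit of pile v ∈ V at position j_e equals 1 iff v ∈ e, and the binary digit of pile i ∈ I_f at position j_e equals 1 iff e = f (all other digits are 0). Then x is an N-position, and there exists a move from x to a P-position y with S(y) = S(x) − Σ_{e∈E} 2^{j_e} (a 'maximal move') if and only if G has a vertex cover of size at most c. -/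

import Mathlib

/-- A move of Moore's NIM game NIM(n,k): strictly decrease the piles in some
nonempty set of at most `k` indices, leaving all other piles unchanged. -/
def MooreMove {ι : Type*} [Fintype ι] (k : ℕ) (x y : ι → ℕ) : Prop :=
  (∀ i, y i ≤ x i) ∧ y ≠ x ∧ (Finset.univ.filter fun i => y i < x i).card ≤ k

/-- P-positions of Moore's NIM (Moore's theorem): every binary column sum is
congruent to `0` modulo `k+1`. -/
def MoorePPos {ι : Type*} [Fintype ι] (k : ℕ) (x : ι → ℕ) : Prop :=
  ∀ j : ℕ, (∑ i, ((x i).testBit j).toNat) % (k + 1) = 0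

lemma toNat_decide (P : Prop) [Decidable P] : (decide P).toNat = if P then 1 else 0 := by
  by_cases h : P <;> simp [h]


lemma sum_range_two_pow (n : ℕ) : ∑ i ∈ Finset.range n, 2^i + 1 = 2^n := by
  induction n with
  | zero => simp
  | succ n ih => rw [Finset.sum_range_succ, pow_succ]; omega

lemma sum_two_pow_lt {t : Finset ℕ} {M : ℕ} (h : ∀ i ∈ t, i < M) :
    ∑ i ∈ t, 2^i < 2^M := by
  have hsub : t ⊆ Finset.range M := fun i hi => Finset.mem_range.mpr (h i hi)
  calc ∑ i ∈ t, 2^i ≤ ∑ i ∈ Finset.range M, 2^i := Finset.sum_le_sum_of_subset hsub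
    _ < 2^M := by have := sum_range_two_pow M; omega

lemma testBit_sum_finset (t : Finset ℕ) (j : ℕ) :
    (∑ i ∈ t, 2^i).testBit j = decide (j ∈ t) := by
  induction t using Finset.strongInduction with
  | _ t ih =>
    rcases t.eq_empty_or_nonempty with rfl | ht
    · simp [Nat.testBit]
    · set M := t.max' ht with hM
      have hMt : M ∈ t := t.max'_mem ht
      have hins : t = insert M (t.erase M) := (Finset.insert_erase hMt).symm
      have hlt : ∀ i ∈ t.erase M, i < M := by
        intro i hi
        rcases Finset.mem_erase.mp hi with ⟨hne, hit⟩
        exact lt_of_le_of_ne (t.le_max' i hit) hne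
      have hS : ∑ i ∈ t.erase M, 2^i < 2^M := sum_two_pow_lt hlt
      rw [hins, Finset.sum_insert (Finset.notMem_erase _ _)]
      have iherase := ih (t.erase M) (Finset.erase_ssubset hMt)
      rcases lt_trichotomy j M with hj | rfl | hj
      · rw [Nat.testBit_two_pow_add_gt hj, iherase]
        have : j ∈ t.erase M ↔ j ∈ insert M (t.erase M) := by
          simp [Finset.mem_erase, Finset.mem_insert]
          intro h; omega
        simp only [decide_eq_decide]; exact this
      · rw [Nat.testBit_two_pow_add_eq]
        simp [Nat.testBit_lt_two_pow hS]
      · have hlt2 : 2^M + ∑ i ∈ t.erase M, 2^i < 2^j := by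
          have h1 : 2^M + 2^M ≤ 2^j := by
            rw [← two_mul, ← pow_succ']
            exact Nat.pow_le_pow_right (by norm_num) hj
          omega
        rw [Nat.testBit_lt_two_pow hlt2]
        have : j ∉ insert M (t.erase M) := by
          rw [← hins]; intro hjt
          exact absurd (t.le_max' j hjt) (by omega)
        simp [this]

lemma testBit_sum_pow {α : Type*} [DecidableEq α] (s : Finset α) (g : α → ℕ)
    (hg : ∀ a ∈ s, ∀ b ∈ s, g a = g b → a = b) (j : ℕ) :
    (∑ a ∈ s, 2^(g a)).testBit j = decide (∃ a ∈ s, g a = j) := by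
  rw [← Finset.sum_image (f := fun i => 2^i) (g := g) (by intro a ha b hb; exact hg a ha b hb),
    testBit_sum_finset]
  simp only [decide_eq_decide, Finset.mem_image]

lemma eq_sum_testBit {B n : ℕ} (h : n < 2^B) :
    ∑ j ∈ Finset.range B, 2^j * (n.testBit j).toNat = n := by
  induction B generalizing n with
  | zero => simp at h ⊢; omega
  | succ B ih =>
    rw [Finset.sum_range_succ']
    have h2 : n / 2 < 2^B := by
      rw [pow_succ] at h; omega
    have hterm : ∀ j, 2^(j+1) * ((n.testBit (j+1)).toNat) =
        2 * (2^j * (((n/2).testBit j).toNat)) := by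
      intro j
      rw [Nat.testBit_succ, pow_succ]
      ring
    rw [Finset.sum_congr rfl (fun j _ => hterm j), ← Finset.mul_sum, ih h2]
    have h0 : (n.testBit 0).toNat = n % 2 := by
      rw [Nat.testBit_zero]
      rcases Nat.mod_two_eq_zero_or_one n with h | h <;> simp [h]
    rw [h0]; simp; omega

lemma digits_eq_one (s : Finset ℕ) (t : ℕ → ℕ) (hle : ∀ j ∈ s, t j ≤ 2)
    (hsum : ∑ j ∈ s, 2^j * t j = ∑ j ∈ s, 2^j) : ∀ j ∈ s, t j = 1 := by
  induction s using Finset.strongInduction with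
  | _ s ih =>
    intro j hj
    have hs : s.Nonempty := ⟨j, hj⟩
    set M := s.max' hs with hM
    have hMs : M ∈ s := s.max'_mem hs
    have hins : s = insert M (s.erase M) := (Finset.insert_erase hMs).symm
    have hlt : ∀ i ∈ s.erase M, i < M := by
      intro i hi
      rcases Finset.mem_erase.mp hi with ⟨hne, hit⟩
      exact lt_of_le_of_ne (s.le_max' i hit) hne
    have hB : ∑ i ∈ s.erase M, 2^i < 2^M := sum_two_pow_lt hlt
    have hA : ∑ i ∈ s.erase M, 2^i * t i ≤ 2 * ∑ i ∈ s.erase M, 2^i := by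
      rw [Finset.mul_sum]
      apply Finset.sum_le_sum
      intro i hi
      have := hle i (Finset.mem_erase.mp hi).2
      nlinarith [(show 0 < 2^i by positivity)]
    rw [hins, Finset.sum_insert (Finset.notMem_erase _ _),
      Finset.sum_insert (Finset.notMem_erase _ _)] at hsum
    have htM : t M = 1 := by
      have h2 := hle M hMs
      interval_cases h : t M <;> omega
    by_cases hjM : j = M
    · rw [hjM, htM]
    · have hsum' : ∑ i ∈ s.erase M, 2^i * t i = ∑ i ∈ s.erase M, 2^i := by
        rw [htM] at hsum; omega
      exact ih (s.erase M) (Finset.erase_ssubset hMs)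
        (fun i hi => hle i (Finset.mem_erase.mp hi).2) hsum' j
        (Finset.mem_erase.mpr ⟨hjM, hj⟩)

lemma card_mem_sym2 {V : Type*} [Fintype V] [DecidableEq V] {e : Sym2 V} (he : ¬ e.IsDiag) :
    (Finset.univ.filter (· ∈ e)).card = 2 := by
  induction e using Sym2.ind with
  | _ a b =>
    have hab : a ≠ b := by simpa using he
    have : Finset.univ.filter (· ∈ s(a, b)) = {a, b} := by
      ext v; simp [Sym2.mem_iff]
    rw [this, Finset.card_insert_of_notMem (by simp [hab]), Finset.card_singleton]

set_option maxHeartbeats 2000000 in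
theorem maxnim_iff_vertexCover {V : Type*} [Fintype V] [DecidableEq V]
    (G : SimpleGraph V) [DecidableRel G.Adj] (hE : G.edgeFinset.Nonempty)
    (c : ℕ) (hc : 0 < c)
    (je : Sym2 V → ℕ) (hje : ∀ e ∈ G.edgeFinset, ∀ e' ∈ G.edgeFinset, je e = je e' → e = e')
    (x : (V ⊕ (↥G.edgeFinset × Fin c)) → ℕ)
    (hxv : ∀ v : V, x (Sum.inl v) = ∑ e ∈ G.edgeFinset, if v ∈ e then 2 ^ je e else 0)
    (hxe : ∀ (e : ↥G.edgeFinset) (i : Fin c), x (Sum.inr (e, i)) = 2 ^ je ↑e) :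
    ¬ MoorePPos c x ∧
      ((∃ y, MooreMove c x y ∧ MoorePPos c y ∧
          (∑ i, y i) + (∑ e ∈ G.edgeFinset, 2 ^ je e) = ∑ i, x i) ↔
        ∃ C : Finset V, C.card ≤ c ∧ ∀ e ∈ G.edgeFinset, ∃ v ∈ C, v ∈ e) := by
  classical
  -- bit of a vertex pile
  have hbv : ∀ (v : V) (j : ℕ), ((x (Sum.inl v)).testBit j) =
      decide (∃ e ∈ G.edgeFinset, v ∈ e ∧ je e = j) := by
    intro v j
    rw [hxv v, ← Finset.sum_filter, testBit_sum_pow _ _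
      (fun a ha b hb hab => hje a (Finset.mem_filter.mp ha).1 b (Finset.mem_filter.mp hb).1 hab)]
    simp only [decide_eq_decide, Finset.mem_filter]
    tauto
  -- bit of an I pile
  have hbe : ∀ (e : ↥G.edgeFinset) (i : Fin c) (j : ℕ),
      ((x (Sum.inr (e, i))).testBit j) = decide (je ↑e = j) := by
    intro e i j; rw [hxe]; exact Nat.testBit_two_pow
  -- splitting a column sum
  have hcol : ∀ (z : (V ⊕ (↥G.edgeFinset × Fin c)) → ℕ) (j : ℕ),
      (∑ i, ((z i).testBit j).toNat) =
      (∑ v : V, ((z (Sum.inl v)).testBit j).toNat) +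
      (∑ e : ↥G.edgeFinset, ∑ i : Fin c, ((z (Sum.inr (e, i))).testBit j).toNat) := by
    intro z j; rw [Fintype.sum_sum_type, Fintype.sum_prod_type]
  -- the I-pile part of a column of x
  have hIcol_at : ∀ e₀ ∈ G.edgeFinset,
      (∑ e : ↥G.edgeFinset, ∑ i : Fin c, ((x (Sum.inr (e, i))).testBit (je e₀)).toNat) = c := by
    intro e₀ he₀
    have h1 : ∀ (e : ↥G.edgeFinset),
        (∑ i : Fin c, ((x (Sum.inr (e, i))).testBit (je e₀)).toNat) =
        if (e : Sym2 V) = e₀ then c else 0 := by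
      intro e
      have : ∀ i : Fin c, ((x (Sum.inr (e, i))).testBit (je e₀)).toNat =
          if (e : Sym2 V) = e₀ then 1 else 0 := by
        intro i
        rw [hbe, toNat_decide]
        congr 1
        simp only [eq_iff_iff]
        exact ⟨fun h => hje _ e.2 _ he₀ h, fun h => by rw [h]⟩
      rw [Finset.sum_congr rfl (fun i _ => this i), Finset.sum_const, Finset.card_univ,
        Fintype.card_fin, smul_eq_mul]
      split_ifs <;> omega
    rw [Finset.sum_congr rfl (fun e _ => h1 e)]
    have := Finset.sum_coe_sort G.edgeFinset (fun e => if e = e₀ then c else 0)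
    rw [this, Finset.sum_ite_eq' G.edgeFinset e₀ (fun _ => c), if_pos he₀]
  have hIcol_off : ∀ j, (∀ e ∈ G.edgeFinset, je e ≠ j) →
      (∑ e : ↥G.edgeFinset, ∑ i : Fin c, ((x (Sum.inr (e, i))).testBit j).toNat) = 0 := by
    intro j hj
    apply Finset.sum_eq_zero; intro e _
    apply Finset.sum_eq_zero; intro i _
    rw [hbe, toNat_decide, if_neg (hj _ e.2)]
  -- the vertex part of a column of x
  have hVcol_at : ∀ e₀ ∈ G.edgeFinset,
      (∑ v : V, ((x (Sum.inl v)).testBit (je e₀)).toNat) = 2 := by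
    intro e₀ he₀
    have h1 : ∀ v : V, ((x (Sum.inl v)).testBit (je e₀)).toNat =
        if v ∈ e₀ then 1 else 0 := by
      intro v
      rw [hbv, toNat_decide]
      congr 1
      simp only [eq_iff_iff]
      constructor
      · rintro ⟨e, he, hv, hjee⟩; rwa [hje e he e₀ he₀ hjee] at hv
      · intro hv; exact ⟨e₀, he₀, hv, rfl⟩
    rw [Finset.sum_congr rfl (fun v _ => h1 v), ← Finset.sum_filter, Finset.sum_const,
      smul_eq_mul, mul_one]
    exact card_mem_sym2 (G.not_isDiag_of_mem_edgeSet (SimpleGraph.mem_edgeFinset.mp he₀))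
  have hVcol_off : ∀ j, (∀ e ∈ G.edgeFinset, je e ≠ j) →
      (∑ v : V, ((x (Sum.inl v)).testBit j).toNat) = 0 := by
    intro j hj
    apply Finset.sum_eq_zero; intro v _
    rw [hbv, toNat_decide, if_neg]
    rintro ⟨e, he, _, hjee⟩; exact hj e he hjee
  have hcolx_at : ∀ e₀ ∈ G.edgeFinset,
      (∑ i, ((x i).testBit (je e₀)).toNat) = c + 2 := by
    intro e₀ he₀
    rw [hcol, hVcol_at e₀ he₀, hIcol_at e₀ he₀]; omega
  obtain ⟨e₀, he₀⟩ := hE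
  constructor
  · -- x is an N-position
    intro hP
    have := hP (je e₀)
    rw [hcolx_at e₀ he₀] at this
    have h1 : (c + 2) % (c + 1) = 1 := by
      rw [show c + 2 = (c + 1) + 1 from rfl, Nat.add_mod_left, Nat.mod_eq_of_lt (by omega)]
    omega
  · constructor
    · rintro ⟨y, ⟨hyle, hyne, hycard⟩, hP, hsum⟩
      set B := G.edgeFinset.sup je + 1 with hB
      have hjeB : ∀ e ∈ G.edgeFinset, je e < B := fun e he =>
        lt_of_le_of_lt (Finset.le_sup he) (Nat.lt_succ_self _)
      have hxlt : ∀ i, x i < 2 ^ B := by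
        intro i
        cases i with
        | inl v =>
          rw [hxv, ← Finset.sum_filter, ← Finset.sum_image (f := fun j => 2 ^ j) (g := je)
            (fun a ha b hb hab =>
              hje a (Finset.mem_filter.mp ha).1 b (Finset.mem_filter.mp hb).1 hab)]
          apply sum_two_pow_lt
          intro j hj
          obtain ⟨e, he, rfl⟩ := Finset.mem_image.mp hj
          exact hjeB e (Finset.mem_filter.mp he).1
        | inr p =>
          obtain ⟨e, i⟩ := p
          rw [hxe e i]
          exact Nat.pow_lt_pow_right (by norm_num) (hjeB _ e.2)
      have hylt : ∀ i, y i < 2 ^ B := fun i => lt_of_le_of_lt (hyle i) (hxlt i)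
      have htot : ∀ z : (V ⊕ (↥G.edgeFinset × Fin c)) → ℕ, (∀ i, z i < 2 ^ B) →
          ∑ i, z i = ∑ j ∈ Finset.range B, 2 ^ j * (∑ i, ((z i).testBit j).toNat) := by
        intro z hz
        rw [Finset.sum_congr rfl (fun i (_ : i ∈ Finset.univ) => (eq_sum_testBit (hz i)).symm),
          Finset.sum_comm]
        apply Finset.sum_congr rfl
        intro j _
        rw [Finset.mul_sum]
      have hx_total : ∑ i, x i = ∑ e ∈ G.edgeFinset, 2 ^ je e * (c + 2) := by
        rw [Fintype.sum_sum_type]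
        have hV : ∑ v : V, x (Sum.inl v) = ∑ e ∈ G.edgeFinset, 2 ^ je e * 2 := by
          rw [Finset.sum_congr rfl fun v _ => hxv v, Finset.sum_comm]
          apply Finset.sum_congr rfl
          intro e he
          rw [← Finset.sum_filter, Finset.sum_const, smul_eq_mul,
            card_mem_sym2 (G.not_isDiag_of_mem_edgeSet (SimpleGraph.mem_edgeFinset.mp he))]
          ring
        have hI : ∑ p : ↥G.edgeFinset × Fin c, x (Sum.inr p) =
            ∑ e ∈ G.edgeFinset, 2 ^ je e * c := by
          rw [Fintype.sum_prod_type]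
          have h2 : ∀ e : ↥G.edgeFinset, ∑ i : Fin c, x (Sum.inr (e, i)) = 2 ^ je ↑e * c := by
            intro e
            rw [Finset.sum_congr rfl fun i _ => hxe e i, Finset.sum_const, Finset.card_univ,
              Fintype.card_fin, smul_eq_mul]
            ring
          rw [Finset.sum_congr rfl fun e _ => h2 e,
            Finset.sum_coe_sort G.edgeFinset (fun e => 2 ^ je e * c)]
        rw [hV, hI, ← Finset.sum_add_distrib]
        apply Finset.sum_congr rfl; intro e _; ring
      set U := (Finset.univ.filter fun i => y i < x i) with hU
      have hunch : ∀ i, i ∉ U → y i = x i := by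
        intro i hi
        by_contra h
        exact hi (Finset.mem_filter.mpr ⟨Finset.mem_univ _, lt_of_le_of_ne (hyle i) h⟩)
      have hsplit : ∀ j, (∑ i, ((y i).testBit j).toNat) =
          (∑ i ∈ Finset.univ \ U, ((y i).testBit j).toNat) +
          ∑ i ∈ U, ((y i).testBit j).toNat :=
        fun j => (Finset.sum_sdiff (Finset.subset_univ U)).symm
      have hUbound : ∀ j, (∑ i ∈ U, ((y i).testBit j).toNat) ≤ c := by
        intro j
        calc ∑ i ∈ U, ((y i).testBit j).toNat ≤ U.card • 1 :=
            Finset.sum_le_card_nsmul _ _ _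
              (fun i _ => by cases h : (y i).testBit j <;> simp [h])
          _ ≤ c := by simpa using hycard
      have hcoly_off : ∀ j, (∀ e ∈ G.edgeFinset, je e ≠ j) →
          (∑ i, ((y i).testBit j).toNat) = 0 := by
        intro j hj
        have h0 : (∑ i ∈ Finset.univ \ U, ((y i).testBit j).toNat) = 0 := by
          apply Finset.sum_eq_zero
          intro i hi
          rw [hunch i (Finset.mem_sdiff.mp hi).2]
          cases i with
          | inl v =>
            rw [hbv, toNat_decide, if_neg]
            rintro ⟨e, he, _, hjee⟩
            exact hj e he hjee
          | inr p =>
            obtain ⟨e, k⟩ := p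
            rw [hbe, toNat_decide, if_neg (hj ↑e e.2)]
        have hdvd : (c + 1) ∣ (∑ i, ((y i).testBit j).toNat) := Nat.dvd_of_mod_eq_zero (hP j)
        have hle : (∑ i, ((y i).testBit j).toNat) ≤ c := by
          have := hUbound j
          have := hsplit j
          omega
        exact Nat.eq_zero_of_dvd_of_lt hdvd (by omega)
      have hcoly_le : ∀ e ∈ G.edgeFinset,
          (∑ i, ((y i).testBit (je e)).toNat) ≤ 2 * c + 2 := by
        intro e he
        have h1 : (∑ i ∈ Finset.univ \ U, ((y i).testBit (je e)).toNat) ≤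
            ∑ i, ((x i).testBit (je e)).toNat :=
          calc (∑ i ∈ Finset.univ \ U, ((y i).testBit (je e)).toNat)
              = ∑ i ∈ Finset.univ \ U, ((x i).testBit (je e)).toNat :=
              Finset.sum_congr rfl (fun i hi => by rw [hunch i (Finset.mem_sdiff.mp hi).2])
            _ ≤ _ := Finset.sum_le_sum_of_subset (Finset.sdiff_subset)
        have h2 := hcolx_at e he
        have h3 := hsplit (je e)
        have h4 := hUbound (je e)
        omega
      have hy_total : ∑ i, y i =
          ∑ e ∈ G.edgeFinset, 2 ^ je e * (∑ i, ((y i).testBit (je e)).toNat) := by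
        rw [htot y hylt]
        have himg : G.edgeFinset.image je ⊆ Finset.range B := by
          intro j hj; obtain ⟨e, he, rfl⟩ := Finset.mem_image.mp hj
          exact Finset.mem_range.mpr (hjeB e he)
        have hvan : ∀ j ∈ Finset.range B, j ∉ G.edgeFinset.image je →
            2 ^ j * (∑ i, ((y i).testBit j).toNat) = 0 := by
          intro j _ hjn
          have hne : ∀ e ∈ G.edgeFinset, je e ≠ j := by
            intro e he hjee; exact hjn (Finset.mem_image.mpr ⟨e, he, hjee⟩)
          rw [hcoly_off j hne, mul_zero]
        rw [← Finset.sum_subset himg hvan, Finset.sum_image hje]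
      have heq : ∑ e ∈ G.edgeFinset, 2 ^ je e * (∑ i, ((y i).testBit (je e)).toNat) =
          ∑ e ∈ G.edgeFinset, 2 ^ je e * (c + 1) := by
        have hx2 : ∑ e ∈ G.edgeFinset, 2 ^ je e * (c + 2) =
            ∑ e ∈ G.edgeFinset, 2 ^ je e * (c + 1) + ∑ e ∈ G.edgeFinset, 2 ^ je e := by
          rw [← Finset.sum_add_distrib]; apply Finset.sum_congr rfl; intro e _; ring
        have h5 : (∑ e ∈ G.edgeFinset, 2 ^ je e * (∑ i, ((y i).testBit (je e)).toNat)) +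
            ∑ e ∈ G.edgeFinset, 2 ^ je e = ∑ e ∈ G.edgeFinset, 2 ^ je e * (c + 2) := by
          rw [← hy_total, ← hx_total]; exact hsum
        omega
      have hcoly_at : ∀ e ∈ G.edgeFinset, (∑ i, ((y i).testBit (je e)).toNat) = c + 1 := by
        have hdvd : ∀ j, (c + 1) ∣ (∑ i, ((y i).testBit j).toNat) :=
          fun j => Nat.dvd_of_mod_eq_zero (hP j)
        set t : ℕ → ℕ := fun j => (∑ i, ((y i).testBit j).toNat) / (c + 1) with ht
        have hct : ∀ j, (c + 1) * t j = ∑ i, ((y i).testBit j).toNat :=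
          fun j => Nat.mul_div_cancel' (hdvd j)
        have hsum2 : ∑ j ∈ G.edgeFinset.image je, 2 ^ j * t j =
            ∑ j ∈ G.edgeFinset.image je, 2 ^ j := by
          apply Nat.eq_of_mul_eq_mul_left (show 0 < c + 1 by omega)
          rw [Finset.mul_sum, Finset.mul_sum]
          have hL : ∀ j ∈ G.edgeFinset.image je,
              (c + 1) * (2 ^ j * t j) = 2 ^ j * (∑ i, ((y i).testBit j).toNat) := by
            intro j _; rw [← hct j]; ring
          rw [Finset.sum_congr rfl hL, Finset.sum_image hje, heq, Finset.sum_image hje]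
          apply Finset.sum_congr rfl; intro e _; ring
        have hbound : ∀ j ∈ G.edgeFinset.image je, t j ≤ 2 := by
          intro j hj
          obtain ⟨e, he, rfl⟩ := Finset.mem_image.mp hj
          have h1 := hcoly_le e he
          calc t (je e) ≤ (2 * c + 2) / (c + 1) := Nat.div_le_div_right h1
            _ = 2 := by
              rw [show 2 * c + 2 = 2 * (c + 1) by ring, Nat.mul_div_cancel _ (by omega)]
        intro e he
        have h6 := digits_eq_one _ t hbound hsum2 (je e) (Finset.mem_image_of_mem je he)
        have h7 := hct (je e)
        rw [h6, mul_one] at h7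
        omega
      have hkey : ∀ e (he : e ∈ G.edgeFinset),
          (∃ v, v ∈ e ∧ Sum.inl v ∈ U) ∨
          (∃ i : Fin c, Sum.inr ((⟨e, he⟩ : ↥G.edgeFinset), i) ∈ U) := by
        intro e he
        by_contra hcon
        push_neg at hcon
        obtain ⟨h1, h2⟩ := hcon
        set S : Finset (V ⊕ (↥G.edgeFinset × Fin c)) :=
          ((Finset.univ.filter (· ∈ e)).image Sum.inl) ∪
            (Finset.univ.image (fun i : Fin c => Sum.inr (⟨e, he⟩, i))) with hS
        have hbit1 : ∀ i ∈ S, 1 ≤ ((y i).testBit (je e)).toNat := by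
          intro i hi
          rw [hS, Finset.mem_union] at hi
          rcases hi with hi | hi
          · obtain ⟨v, hv, rfl⟩ := Finset.mem_image.mp hi
            have hv' := (Finset.mem_filter.mp hv).2
            rw [hunch _ (h1 v hv'), hbv, toNat_decide, if_pos ⟨e, he, hv', rfl⟩]
          · obtain ⟨k, _, rfl⟩ := Finset.mem_image.mp hi
            rw [hunch _ (h2 k), hbe, toNat_decide, if_pos rfl]
        have hdisj : Disjoint ((Finset.univ.filter (· ∈ e)).image Sum.inl)
            (Finset.univ.image (fun i : Fin c => Sum.inr ((⟨e, he⟩ : ↥G.edgeFinset), i))) := by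
          rw [Finset.disjoint_left]
          rintro a ha hb
          obtain ⟨v, _, rfl⟩ := Finset.mem_image.mp ha
          obtain ⟨k, _, h⟩ := Finset.mem_image.mp hb
          cases h
        have hcardS : S.card = c + 2 := by
          rw [hS, Finset.card_union_of_disjoint hdisj,
            Finset.card_image_of_injective _ Sum.inl_injective,
            card_mem_sym2 (G.not_isDiag_of_mem_edgeSet (SimpleGraph.mem_edgeFinset.mp he)),
            Finset.card_image_of_injective _
              (fun a b hab => by simpa using hab),
            Finset.card_univ, Fintype.card_fin]
          omega
        have hge : c + 2 ≤ ∑ i, ((y i).testBit (je e)).toNat :=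
          calc (c + 2 : ℕ) = S.card • 1 := by rw [hcardS]; simp
            _ ≤ ∑ i ∈ S, ((y i).testBit (je e)).toNat := Finset.card_nsmul_le_sum S _ 1 hbit1
            _ ≤ ∑ i, ((y i).testBit (je e)).toNat :=
              Finset.sum_le_sum_of_subset (Finset.subset_univ S)
        have := hcoly_at e he
        omega
      set UV := Finset.univ.filter (fun v : V => y (Sum.inl v) < x (Sum.inl v)) with hUV
      set F := G.edgeFinset.filter (fun e => ∀ v ∈ UV, v ∉ e) with hF
      refine ⟨UV ∪ F.image (fun e => (Quot.out e).1), ?_, ?_⟩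
      · have hL : UV.card ≤ (U.filter (fun i => i.isLeft = true)).card := by
          apply Finset.card_le_card_of_injOn Sum.inl
          · intro v hv
            have hv' := (Finset.mem_filter.mp hv).2
            exact Finset.mem_filter.mpr
              ⟨Finset.mem_filter.mpr ⟨Finset.mem_univ _, hv'⟩, rfl⟩
          · intro a _ b _ hab; exact Sum.inl_injective hab
        have hR : F.card ≤ (U.filter (fun i => ¬ i.isLeft = true)).card := by
          apply Finset.card_le_card_of_surjOn
            (Sum.elim (fun _ => e₀) (fun p => ((p.1 : Sym2 V))))
          intro e he
          rw [Finset.mem_coe, hF, Finset.mem_filter] at he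
          obtain ⟨heE, hnc⟩ := he
          rcases hkey e heE with ⟨v, hve, hvU⟩ | ⟨k, hkU⟩
          · exact absurd hve (hnc v (Finset.mem_filter.mpr
              ⟨Finset.mem_univ _, (Finset.mem_filter.mp hvU).2⟩))
          · refine ⟨Sum.inr (⟨e, heE⟩, k), ?_, rfl⟩
            rw [Finset.mem_coe, Finset.mem_filter]
            exact ⟨hkU, by simp⟩
        have hsplitU := Finset.card_filter_add_card_filter_not
          (s := U) (p := fun i : V ⊕ (↥G.edgeFinset × Fin c) => i.isLeft = true)
        have himg := Finset.card_image_le (s := F) (f := fun e => (Quot.out e).1)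
        have hun := Finset.card_union_le UV (F.image (fun e => (Quot.out e).1))
        omega
      · intro e he
        by_cases hev : ∃ v ∈ UV, v ∈ e
        · obtain ⟨v, hvU, hve⟩ := hev
          exact ⟨v, Finset.mem_union_left _ hvU, hve⟩
        · push_neg at hev
          have heF : e ∈ F := Finset.mem_filter.mpr ⟨he, hev⟩
          exact ⟨(Quot.out e).1, Finset.mem_union_right _ (Finset.mem_image_of_mem _ heF),
            Sym2.out_fst_mem e⟩
    · rintro ⟨C, hCc, hCcov⟩
      haveI : Nonempty V := ⟨(Quot.out e₀).1⟩
      set pick : Sym2 V → V := fun e =>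
        if h : ∃ v ∈ C, v ∈ e then h.choose else Classical.arbitrary V with hpickdef
      have hpick : ∀ e ∈ G.edgeFinset, pick e ∈ C ∧ pick e ∈ e := by
        intro e he
        have h := hCcov e he
        simp only [hpickdef, dif_pos h]
        exact ⟨h.choose_spec.1, h.choose_spec.2⟩
      set y : (V ⊕ (↥G.edgeFinset × Fin c)) → ℕ := fun i =>
        Sum.elim (fun v => ∑ e ∈ G.edgeFinset, if v ∈ e ∧ pick e ≠ v then 2 ^ je e else 0)
          (fun p => x (Sum.inr p)) i with hydef
      have hyv : ∀ v, y (Sum.inl v) =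
          ∑ e ∈ G.edgeFinset, if v ∈ e ∧ pick e ≠ v then 2 ^ je e else 0 := fun v => rfl
      have hyinr : ∀ p, y (Sum.inr p) = x (Sum.inr p) := fun p => rfl
      have hyle : ∀ i, y i ≤ x i := by
        intro i
        cases i with
        | inl v =>
          rw [hyv, hxv]
          apply Finset.sum_le_sum
          intro e _
          by_cases h1 : v ∈ e ∧ pick e ≠ v
          · rw [if_pos h1, if_pos h1.1]
          · rw [if_neg h1]; exact Nat.zero_le _
        | inr p => exact le_of_eq (hyinr p)
      have hstrict : y (Sum.inl (pick e₀)) < x (Sum.inl (pick e₀)) := by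
        rw [hyv, hxv]
        apply Finset.sum_lt_sum
        · intro e _
          by_cases h1 : pick e₀ ∈ e ∧ pick e ≠ pick e₀
          · rw [if_pos h1, if_pos h1.1]
          · rw [if_neg h1]; exact Nat.zero_le _
        · refine ⟨e₀, he₀, ?_⟩
          rw [if_neg (by simp), if_pos (hpick e₀ he₀).2]
          positivity
      refine ⟨y, ⟨hyle, ?_, ?_⟩, ?_, ?_⟩
      · intro h
        exact absurd (congrFun h (Sum.inl (pick e₀))) (ne_of_lt hstrict)
      · -- at most c piles change
        have hsub : (Finset.univ.filter fun i => y i < x i) ⊆ C.image Sum.inl := by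
          intro i hi
          rw [Finset.mem_filter] at hi
          match i with
          | Sum.inr p =>
            exact absurd (hyinr p) (ne_of_lt hi.2)
          | Sum.inl v =>
            refine Finset.mem_image.mpr ⟨v, ?_, rfl⟩
            by_contra hv
            have heq : y (Sum.inl v) = x (Sum.inl v) := by
              rw [hyv, hxv]
              apply Finset.sum_congr rfl
              intro e he
              have hne : pick e ≠ v := fun h => hv (h ▸ (hpick e he).1)
              simp [hne]
            exact absurd heq (ne_of_lt hi.2)
        calc (Finset.univ.filter fun i => y i < x i).card
            ≤ (C.image Sum.inl).card := Finset.card_le_card hsub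
          _ ≤ C.card := Finset.card_image_le
          _ ≤ c := hCc
      · -- MoorePPos y
        intro j
        have hbyv : ∀ v, ((y (Sum.inl v)).testBit j) =
            decide (∃ e ∈ G.edgeFinset, (v ∈ e ∧ pick e ≠ v) ∧ je e = j) := by
          intro v
          rw [hyv, ← Finset.sum_filter, testBit_sum_pow _ _
            (fun a ha b hb hab =>
              hje a (Finset.mem_filter.mp ha).1 b (Finset.mem_filter.mp hb).1 hab)]
          simp only [decide_eq_decide, Finset.mem_filter]
          constructor
          · rintro ⟨e, ⟨he, hv⟩, hj'⟩; exact ⟨e, he, hv, hj'⟩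
          · rintro ⟨e, he, hv, hj'⟩; exact ⟨e, ⟨he, hv⟩, hj'⟩
        rw [hcol y j]
        by_cases hex : ∃ e₁ ∈ G.edgeFinset, je e₁ = j
        · obtain ⟨e₁, he₁, hj1⟩ := hex
          subst hj1
          have h1 : ∀ v, ((y (Sum.inl v)).testBit (je e₁)).toNat =
              if v ∈ e₁ ∧ pick e₁ ≠ v then 1 else 0 := by
            intro v; rw [hbyv, toNat_decide]; congr 1
            simp only [eq_iff_iff]
            constructor
            · rintro ⟨e, he, hv, hjee⟩; rwa [hje e he e₁ he₁ hjee] at hv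
            · intro hv; exact ⟨e₁, he₁, hv, rfl⟩
          have hVpart : (∑ v, ((y (Sum.inl v)).testBit (je e₁)).toNat) = 1 := by
            rw [Finset.sum_congr rfl fun v _ => h1 v, ← Finset.sum_filter,
              Finset.sum_const, smul_eq_mul, mul_one]
            have hfil : Finset.univ.filter (fun v => v ∈ e₁ ∧ pick e₁ ≠ v) =
                (Finset.univ.filter (· ∈ e₁)).erase (pick e₁) := by
              ext v
              simp only [Finset.mem_erase, Finset.mem_filter, Finset.mem_univ, true_and]
              constructor
              · rintro ⟨hv, hp⟩; exact ⟨hp.symm, hv⟩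
              · rintro ⟨hp, hv⟩; exact ⟨hv, hp.symm⟩
            rw [hfil, Finset.card_erase_of_mem
              (by simp only [Finset.mem_filter, Finset.mem_univ, true_and]; exact (hpick e₁ he₁).2),
              card_mem_sym2 (G.not_isDiag_of_mem_edgeSet (SimpleGraph.mem_edgeFinset.mp he₁))]
          have hIpart : (∑ e : ↥G.edgeFinset, ∑ i : Fin c,
              ((y (Sum.inr (e, i))).testBit (je e₁)).toNat) = c := by
            have : ∀ (e : ↥G.edgeFinset) (i : Fin c), y (Sum.inr (e, i)) = x (Sum.inr (e, i)) :=
              fun e i => hyinr (e, i)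
            simp only [this]
            exact hIcol_at e₁ he₁
          rw [hVpart, hIpart, Nat.add_comm 1 c, Nat.mod_self]
        · push_neg at hex
          have hVpart : (∑ v, ((y (Sum.inl v)).testBit j).toNat) = 0 := by
            apply Finset.sum_eq_zero; intro v _
            rw [hbyv, toNat_decide, if_neg]
            rintro ⟨e, he, _, hjee⟩; exact hex e he hjee
          have hIpart : (∑ e : ↥G.edgeFinset, ∑ i : Fin c,
              ((y (Sum.inr (e, i))).testBit j).toNat) = 0 := by
            have : ∀ (e : ↥G.edgeFinset) (i : Fin c), y (Sum.inr (e, i)) = x (Sum.inr (e, i)) :=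
              fun e i => hyinr (e, i)
            simp only [this]
            exact hIcol_off j hex
          rw [hVpart, hIpart]
          simp
      · -- stone count
        rw [Fintype.sum_sum_type (f := y), Fintype.sum_sum_type (f := x)]
        have hkey : (∑ v : V, y (Sum.inl v)) + (∑ e ∈ G.edgeFinset, 2 ^ je e) =
            ∑ v : V, x (Sum.inl v) := by
          have hy' : ∑ v : V, y (Sum.inl v) =
              ∑ e ∈ G.edgeFinset, ∑ v : V, (if v ∈ e ∧ pick e ≠ v then 2 ^ je e else 0) := by
            rw [Finset.sum_congr rfl fun v _ => hyv v]
            exact Finset.sum_comm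
          have hx' : ∑ v : V, x (Sum.inl v) =
              ∑ e ∈ G.edgeFinset, ∑ v : V, (if v ∈ e then 2 ^ je e else 0) := by
            rw [Finset.sum_congr rfl fun v _ => hxv v]
            exact Finset.sum_comm
          rw [hy', hx', ← Finset.sum_add_distrib]
          apply Finset.sum_congr rfl
          intro e he
          have hper : ∀ v : V, (if v ∈ e ∧ pick e ≠ v then 2 ^ je e else 0) +
              (if v = pick e then 2 ^ je e else 0) = (if v ∈ e then 2 ^ je e else 0) := by
            intro v
            by_cases hv : v = pick e
            · subst hv; simp [(hpick e he).2]
            · have hne : pick e ≠ v := fun h => hv h.symm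
              simp [hv, hne]
          calc (∑ v, if v ∈ e ∧ pick e ≠ v then 2 ^ je e else 0) + 2 ^ je e
              = ∑ v : V, ((if v ∈ e ∧ pick e ≠ v then 2 ^ je e else 0) +
                (if v = pick e then 2 ^ je e else 0)) := by
                rw [Finset.sum_add_distrib,
                  Finset.sum_ite_eq' Finset.univ (pick e) (fun _ => 2 ^ je e),
                  if_pos (Finset.mem_univ _)]
            _ = ∑ v : V, (if v ∈ e then 2 ^ je e else 0) :=
                Finset.sum_congr rfl fun v _ => hper v
        have hI : (∑ p : ↥G.edgeFinset × Fin c, y (Sum.inr p)) =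
            ∑ p : ↥G.edgeFinset × Fin c, x (Sum.inr p) := rfl
        omega
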